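/- Let n ≥ 1 be an integer, r > 0, and ψ ∈ ℝ with cos ψ ≥ 0. Then ∫₀^∞ n·(r² + 2 r τ cos ψ + τ²)^{−(n+1)/2} dτ ≤ χ(n)/rⁿ, where χ(n) = √π · Γ(n/2 + 1)/Γ(n/2 + 1/2). -/

import Mathlib

open Real Set MeasureTheory

open Filter Topology

lemma aux_deriv (n : ℕ) (t : ℝ) :
    HasDerivAt (fun t : ℝ => t * (1 + t ^ 2) ^ (-(((n : ℝ) + 1) / 2)))
      (((n : ℝ) + 1) * (1 + t ^ 2) ^ (-(((n : ℝ) + 3) / 2))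
        - (n : ℝ) * (1 + t ^ 2) ^ (-(((n : ℝ) + 1) / 2))) t := by
  have hb : (0 : ℝ) < 1 + t ^ 2 := by positivity
  set c : ℝ := -(((n : ℝ) + 1) / 2) with hc
  have h1 : HasDerivAt (fun t : ℝ => 1 + t ^ 2) (2 * t) t := by
    simpa using ((hasDerivAt_pow 2 t).const_add 1)
  have h2 : HasDerivAt (fun t : ℝ => (1 + t ^ 2) ^ c)
      (c * (1 + t ^ 2) ^ (c - 1) * (2 * t)) t := by
    have h := (Real.hasDerivAt_rpow_const (x := 1 + t ^ 2) (p := c) (Or.inl hb.ne')).comp t h1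
    exact h
  have h3 := (hasDerivAt_id t).mul h2
  refine HasDerivAt.congr_deriv h3 ?_
  have hsub : (1 + t ^ 2) ^ (c - 1) = (1 + t ^ 2) ^ c / (1 + t ^ 2) := by
    rw [Real.rpow_sub hb, Real.rpow_one]
  have hexp : -(((n : ℝ) + 3) / 2) = c - 1 := by rw [hc]; ring
  rw [id_eq, hexp, hsub, hc]
  field_simp
  ring

lemma aux_int {s : ℝ} (hs : 1 ≤ s) :
    IntegrableOn (fun t : ℝ => (1 + t ^ 2) ^ (-s)) (Ioi 0) := by
  refine Integrable.mono' (integrable_inv_one_add_sq.restrict)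
    ((Continuous.rpow_const (by continuity) fun x => Or.inl (by positivity)).aestronglyMeasurable)
    (ae_of_all _ fun t => ?_)
  have h1 : (1:ℝ) ≤ 1 + t ^ 2 := by nlinarith [sq_nonneg t]
  rw [Real.norm_of_nonneg (Real.rpow_nonneg (by positivity) _)]
  calc (1 + t ^ 2) ^ (-s) ≤ (1 + t ^ 2) ^ (-1 : ℝ) :=
        Real.rpow_le_rpow_of_exponent_le h1 (by linarith)
    _ = (1 + t ^ 2)⁻¹ := by rw [Real.rpow_neg_one]

lemma aux_tendsto0 (n : ℕ) (hn : 1 ≤ n) :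
    Tendsto (fun t : ℝ => t * (1 + t ^ 2) ^ (-(((n : ℝ) + 1) / 2))) atTop (𝓝 0) := by
  have h1 : Tendsto (fun t : ℝ => t⁻¹) atTop (𝓝 0) := tendsto_inv_atTop_zero
  refine tendsto_of_tendsto_of_tendsto_of_le_of_le' tendsto_const_nhds h1
    (Filter.eventually_atTop.2 ⟨1, fun t ht => by positivity⟩)
    (Filter.eventually_atTop.2 ⟨1, fun t ht => ?_⟩)
  have ht0 : (0:ℝ) < t := by linarith
  have h2 : (1 + t ^ 2) ^ (-(((n : ℝ) + 1) / 2)) ≤ (1 + t ^ 2) ^ (-1 : ℝ) := by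
    apply Real.rpow_le_rpow_of_exponent_le (by nlinarith [sq_nonneg t])
    have : (1:ℝ) ≤ (n:ℝ) := by exact_mod_cast hn
    linarith
  calc t * (1 + t ^ 2) ^ (-(((n : ℝ) + 1) / 2)) ≤ t * (1 + t ^ 2) ^ (-1:ℝ) := by
        apply mul_le_mul_of_nonneg_left h2 ht0.le
    _ = t / (1 + t ^ 2) := by rw [Real.rpow_neg_one]; ring
    _ ≤ t / t ^ 2 := by
        apply div_le_div_of_nonneg_left ht0.le (by positivity) (by nlinarith)
    _ = t⁻¹ := by field_simp

lemma aux_tendsto1 :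
    Tendsto (fun t : ℝ => t * (1 + t ^ 2) ^ (-((1:ℝ) / 2))) atTop (𝓝 1) := by
  have h0 : Tendsto (fun t : ℝ => ((t ^ 2)⁻¹ + 1) ^ (-((1:ℝ)/2))) atTop (𝓝 1) := by
    have h1 : Tendsto (fun t : ℝ => (t ^ 2)⁻¹ + 1) atTop (𝓝 (0 + 1)) := by
      refine Tendsto.add ?_ tendsto_const_nhds
      exact tendsto_inv_atTop_zero.comp (tendsto_pow_atTop (by norm_num))
    rw [zero_add] at h1
    have := h1.rpow_const (p := -((1:ℝ)/2)) (Or.inl one_ne_zero)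
    simpa using this
  refine h0.congr' ?_
  filter_upwards [eventually_gt_atTop (0:ℝ)] with t ht
  have ht2 : (0:ℝ) < t ^ 2 := by positivity
  have hfact : 1 + t ^ 2 = t ^ 2 * ((t ^ 2)⁻¹ + 1) := by field_simp
  rw [hfact, Real.mul_rpow ht2.le (by positivity)]
  have : (t ^ 2 : ℝ) ^ (-((1:ℝ)/2)) = t⁻¹ := by
    rw [← Real.rpow_natCast t 2, ← Real.rpow_mul ht.le]
    norm_num [Real.rpow_neg_one]
  rw [this]
  field_simp

noncomputable def Jfun (n : ℕ) : ℝ := ∫ t in Ioi (0:ℝ), (1 + t ^ 2) ^ (-(((n : ℝ) + 1) / 2))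

lemma J_one : Jfun 1 = π / 2 := by
  have : Jfun 1 = ∫ t in Ioi (0:ℝ), (1 + t ^ 2)⁻¹ := by
    unfold Jfun
    refine integral_congr_ae (ae_of_all _ fun t => ?_)
    norm_num [Real.rpow_neg_one]
  rw [this, integral_Ioi_inv_one_add_sq]
  simp

lemma J_two : Jfun 2 = 1 := by
  have hd : ∀ t ∈ Ici (0:ℝ), HasDerivAt (fun t : ℝ => t * (1 + t ^ 2) ^ (-((1:ℝ) / 2)))
      ((1 + t ^ 2) ^ (-(((2:ℕ):ℝ) + 1) / 2)) t := by
    intro t _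
    have := aux_deriv 0 t
    norm_num at this ⊢
    convert this using 2 <;> norm_num
  have hint : IntegrableOn (fun t : ℝ => (1 + t ^ 2) ^ (-(((2:ℕ):ℝ) + 1) / 2)) (Ioi 0) := by
    have := aux_int (s := 3/2) (by norm_num)
    convert this using 2 <;> norm_num
  have := integral_Ioi_of_hasDerivAt_of_tendsto' hd hint aux_tendsto1
  unfold Jfun
  norm_num at this ⊢
  convert this using 2 <;> norm_num

lemma J_rec (n : ℕ) (hn : 1 ≤ n) : ((n:ℝ) + 1) * Jfun (n + 2) = n * Jfun n := by
  have hd : ∀ t ∈ Ici (0:ℝ), HasDerivAt (fun t : ℝ => t * (1 + t ^ 2) ^ (-(((n : ℝ) + 1) / 2)))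
      (((n : ℝ) + 1) * (1 + t ^ 2) ^ (-(((n : ℝ) + 3) / 2))
        - (n : ℝ) * (1 + t ^ 2) ^ (-(((n : ℝ) + 1) / 2))) t := fun t _ => aux_deriv n t
  have hint1 : IntegrableOn (fun t : ℝ => (1 + t ^ 2) ^ (-(((n : ℝ) + 3) / 2))) (Ioi 0) := by
    have h1 : (1:ℝ) ≤ ((n:ℝ) + 3) / 2 := by
      have : (1:ℝ) ≤ (n:ℝ) := by exact_mod_cast hn
      linarith
    exact aux_int h1
  have hint2 : IntegrableOn (fun t : ℝ => (1 + t ^ 2) ^ (-(((n : ℝ) + 1) / 2))) (Ioi 0) := by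
    have h1 : (1:ℝ) ≤ ((n:ℝ) + 1) / 2 := by
      have : (1:ℝ) ≤ (n:ℝ) := by exact_mod_cast hn
      linarith
    exact aux_int h1
  have hint : IntegrableOn (fun t : ℝ =>
      ((n : ℝ) + 1) * (1 + t ^ 2) ^ (-(((n : ℝ) + 3) / 2))
        - (n : ℝ) * (1 + t ^ 2) ^ (-(((n : ℝ) + 1) / 2))) (Ioi 0) :=
    (hint1.const_mul _).sub (hint2.const_mul _)
  have key := integral_Ioi_of_hasDerivAt_of_tendsto' hd hint (aux_tendsto0 n hn)
  rw [integral_sub (hint1.const_mul _) (hint2.const_mul _),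
    integral_const_mul, integral_const_mul] at key
  have h0 : (0:ℝ) * (1 + (0:ℝ) ^ 2) ^ (-(((n : ℝ) + 1) / 2)) = 0 := by ring
  rw [h0] at key
  have hJ2 : Jfun (n + 2) = ∫ t in Ioi (0:ℝ), (1 + t ^ 2) ^ (-(((n : ℝ) + 3) / 2)) := by
    unfold Jfun
    refine integral_congr_ae (ae_of_all _ fun t => ?_)
    congr 1
    push_cast
    ring
  rw [hJ2]
  unfold Jfun
  linarith [key]

lemma two_step (P : ℕ → Prop) (h1 : P 1) (h2 : P 2)
    (hstep : ∀ n, 1 ≤ n → P n → P (n + 2)) : ∀ n, 1 ≤ n → P n := by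
  intro n
  induction n using Nat.strong_induction_on with
  | _ n ih =>
    match n with
    | 0 => exact fun h => absurd h (by omega)
    | 1 => exact fun _ => h1
    | 2 => exact fun _ => h2
    | (m + 3) => exact fun _ => hstep (m + 1) (by omega) (ih (m + 1) (by omega) (by omega))

noncomputable def Rfun (n : ℕ) : ℝ :=
  Real.sqrt π * Real.Gamma ((n : ℝ) / 2) / (2 * Real.Gamma (((n : ℝ) + 1) / 2))

lemma R_one : Rfun 1 = π / 2 := by
  unfold Rfun
  rw [Nat.cast_one, show ((1:ℝ) + 1) / 2 = 1 by norm_num, Real.Gamma_one,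
    show (1:ℝ) / 2 = 1 / 2 from rfl, Real.Gamma_one_half_eq]
  rw [show Real.sqrt π * Real.sqrt π = π from Real.mul_self_sqrt Real.pi_pos.le]
  norm_num

lemma R_two : Rfun 2 = 1 := by
  unfold Rfun
  rw [Nat.cast_ofNat, show ((2:ℝ) + 1) / 2 = 1 / 2 + 1 by norm_num,
    Real.Gamma_add_one (by norm_num), Real.Gamma_one_half_eq,
    show (2:ℝ) / 2 = 1 by norm_num, Real.Gamma_one]
  have h : Real.sqrt π ≠ 0 := (Real.sqrt_pos.mpr Real.pi_pos).ne'
  field_simp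

lemma R_rec (n : ℕ) (hn : 1 ≤ n) : ((n:ℝ) + 1) * Rfun (n + 2) = n * Rfun n := by
  unfold Rfun
  have hn' : (0:ℝ) < (n:ℝ) := by exact_mod_cast hn
  have e1 : ((n:ℝ) + 2) / 2 = (n:ℝ) / 2 + 1 := by ring
  have e2 : (((n:ℝ) + 2) + 1) / 2 = ((n:ℝ) + 1) / 2 + 1 := by ring
  have g1 : Real.Gamma (((n:ℕ):ℝ) / 2 + 1) = ((n:ℝ) / 2) * Real.Gamma ((n:ℝ) / 2) :=
    Real.Gamma_add_one (by positivity)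
  have g2 : Real.Gamma (((n:ℝ) + 1) / 2 + 1) = (((n:ℝ) + 1) / 2) * Real.Gamma (((n:ℝ) + 1) / 2) :=
    Real.Gamma_add_one (by positivity)
  push_cast
  rw [e1, e2, g1, g2]
  have hg : Real.Gamma (((n:ℝ) + 1) / 2) ≠ 0 :=
    (Real.Gamma_pos_of_pos (by positivity)).ne'
  field_simp

lemma J_eq_R : ∀ n, 1 ≤ n → Jfun n = Rfun n := by
  refine two_step _ (by rw [J_one, R_one]) (by rw [J_two, R_two]) ?_
  intro n hn ih
  have h1 := J_rec n hn
  have h2 := R_rec n hn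
  have hpos : ((n:ℝ) + 1) ≠ 0 := by positivity
  have : ((n:ℝ) + 1) * Jfun (n + 2) = ((n:ℝ) + 1) * Rfun (n + 2) := by
    rw [h1, h2, ih]
  exact mul_left_cancel₀ hpos this

theorem stmt_4 (n : ℕ) (hn : 1 ≤ n) (r : ℝ) (hr : 0 < r) (ψ : ℝ) (hψ : 0 ≤ Real.cos ψ) :
    ∫ τ in Set.Ioi (0 : ℝ),
        (n : ℝ) * (r ^ 2 + 2 * r * τ * Real.cos ψ + τ ^ 2) ^ (-(((n : ℝ) + 1) / 2)) ≤
      (Real.sqrt Real.pi * Real.Gamma ((n : ℝ) / 2 + 1) /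
        Real.Gamma ((n : ℝ) / 2 + 1 / 2)) / r ^ n := by
  set s : ℝ := ((n : ℝ) + 1) / 2 with hs
  have hn1 : (1:ℝ) ≤ (n:ℝ) := by exact_mod_cast hn
  have hs1 : (1:ℝ) ≤ s := by rw [hs]; linarith
  have hs0 : (0:ℝ) ≤ s := by linarith
  -- integrability of the majorant (1 + τ^2) form
  have hJint : IntegrableOn (fun t : ℝ => (1 + t ^ 2) ^ (-s)) (Ioi 0) := aux_int hs1
  -- majorant M
  have hm : (0:ℝ) < min (r ^ 2) 1 := by positivity
  have hbase : ∀ τ : ℝ, min (r ^ 2) 1 * (1 + τ ^ 2) ≤ r ^ 2 + τ ^ 2 := by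
    intro τ
    rcases le_total (r ^ 2) 1 with h | h
    · rw [min_eq_left h]; nlinarith [sq_nonneg τ]
    · rw [min_eq_right h]; nlinarith [sq_nonneg τ]
  have hMle : ∀ τ : ℝ, (r ^ 2 + τ ^ 2) ^ (-s) ≤ (min (r ^ 2) 1) ^ (-s) * (1 + τ ^ 2) ^ (-s) := by
    intro τ
    have h1 : (0:ℝ) < min (r ^ 2) 1 * (1 + τ ^ 2) := by positivity
    have := Real.rpow_le_rpow_of_nonpos h1 (hbase τ) (by linarith : -s ≤ 0)
    rwa [Real.mul_rpow hm.le (by positivity)] at this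
  have hMint : IntegrableOn (fun τ : ℝ => (r ^ 2 + τ ^ 2) ^ (-s)) (Ioi 0) := by
    refine Integrable.mono' ((hJint.const_mul ((min (r ^ 2) 1) ^ (-s)))) ?_ ?_
    · exact (Continuous.rpow_const (by continuity) fun x => Or.inl (by positivity)).aestronglyMeasurable.restrict
    · exact ae_of_all _ fun τ => by
        rw [Real.norm_of_nonneg (Real.rpow_nonneg (by positivity) _)]; exact hMle τ
  have hMint' : IntegrableOn (fun τ : ℝ => (n:ℝ) * (r ^ 2 + τ ^ 2) ^ (-s)) (Ioi 0) :=
    hMint.const_mul _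
  -- LHS integrand bound and integrability
  have hposbase : ∀ τ ∈ Ioi (0:ℝ), (0:ℝ) < r ^ 2 + 2 * r * τ * Real.cos ψ + τ ^ 2 := by
    intro τ hτ
    have : (0:ℝ) ≤ 2 * r * τ * Real.cos ψ := by
      have := le_of_lt (mem_Ioi.mp hτ); positivity
    nlinarith [sq_nonneg τ]
  have hbound : ∀ τ ∈ Ioi (0:ℝ),
      (n : ℝ) * (r ^ 2 + 2 * r * τ * Real.cos ψ + τ ^ 2) ^ (-s) ≤
        (n:ℝ) * (r ^ 2 + τ ^ 2) ^ (-s) := by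
    intro τ hτ
    have h2 : r ^ 2 + τ ^ 2 ≤ r ^ 2 + 2 * r * τ * Real.cos ψ + τ ^ 2 := by
      have hτ' := le_of_lt (mem_Ioi.mp hτ)
      nlinarith [mul_nonneg (mul_nonneg (mul_nonneg (by norm_num : (0:ℝ) ≤ 2) hr.le) hτ') hψ]
    exact mul_le_mul_of_nonneg_left
      (Real.rpow_le_rpow_of_nonpos (by positivity) h2 (by linarith)) (by positivity)
  have hLmeas : AEStronglyMeasurable
      (fun τ : ℝ => (n : ℝ) * (r ^ 2 + 2 * r * τ * Real.cos ψ + τ ^ 2) ^ (-s))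
      (volume.restrict (Ioi 0)) := by
    apply ContinuousOn.aestronglyMeasurable _ measurableSet_Ioi
    exact continuousOn_const.mul (ContinuousOn.rpow_const (by fun_prop)
      fun τ hτ => Or.inl (hposbase τ hτ).ne')
  have hLint : IntegrableOn
      (fun τ : ℝ => (n : ℝ) * (r ^ 2 + 2 * r * τ * Real.cos ψ + τ ^ 2) ^ (-s)) (Ioi 0) := by
    refine Integrable.mono' hMint' hLmeas ?_
    rw [ae_restrict_iff' measurableSet_Ioi]
    refine ae_of_all _ fun τ hτ => ?_
    rw [Real.norm_of_nonneg (mul_nonneg (Nat.cast_nonneg n)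
      (Real.rpow_nonneg (hposbase τ hτ).le _))]
    calc (n : ℝ) * (r ^ 2 + 2 * r * τ * Real.cos ψ + τ ^ 2) ^ (-s) ≤
        (n:ℝ) * (r ^ 2 + τ ^ 2) ^ (-s) := hbound τ hτ
      _ ≤ (n:ℝ) * (r ^ 2 + τ ^ 2) ^ (-s) := le_rfl
  -- step 1 : compare integrals
  have step1 : ∫ τ in Ioi (0:ℝ),
      (n : ℝ) * (r ^ 2 + 2 * r * τ * Real.cos ψ + τ ^ 2) ^ (-s) ≤
      ∫ τ in Ioi (0:ℝ), (n:ℝ) * (r ^ 2 + τ ^ 2) ^ (-s) :=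
    setIntegral_mono_on hLint hMint' measurableSet_Ioi hbound
  -- step 2 : scaling
  have hscale := integral_comp_mul_left_Ioi (fun τ : ℝ => (r ^ 2 + τ ^ 2) ^ (-s)) 0 hr
  rw [mul_zero] at hscale
  have hinner : ∀ x : ℝ, (r ^ 2 + (r * x) ^ 2) ^ (-s) = (r ^ 2) ^ (-s) * (1 + x ^ 2) ^ (-s) := by
    intro x
    rw [← Real.mul_rpow (by positivity) (by positivity)]
    congr 1
    ring
  have hscale2 : ∫ τ in Ioi (0:ℝ), (r ^ 2 + τ ^ 2) ^ (-s) = r * ((r ^ 2) ^ (-s) * Jfun n) := by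
    have e1 : ∫ x in Ioi (0:ℝ), (r ^ 2 + (r * x) ^ 2) ^ (-s)
        = (r ^ 2) ^ (-s) * Jfun n := by
      unfold Jfun
      rw [← integral_const_mul]
      exact integral_congr_ae (ae_of_all _ fun x => hinner x)
    rw [e1] at hscale
    rw [smul_eq_mul] at hscale
    field_simp at hscale ⊢
    linarith [hscale]
  have hrpow : r * (r ^ 2) ^ (-s) = (r ^ n)⁻¹ := by
    have e1 : ((r:ℝ) ^ 2) ^ (-s) = r ^ (2 * -s) := by
      rw [← Real.rpow_natCast r 2, ← Real.rpow_mul hr.le]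
      norm_num
    rw [e1, show r * r ^ (2 * -s) = r ^ (1 + 2 * -s) by rw [Real.rpow_add hr, Real.rpow_one],
      show (1:ℝ) + 2 * -s = -(n:ℝ) by rw [hs]; ring,
      Real.rpow_neg hr.le, Real.rpow_natCast]
  have step2 : ∫ τ in Ioi (0:ℝ), (n:ℝ) * (r ^ 2 + τ ^ 2) ^ (-s)
      = (n:ℝ) * ((r ^ n)⁻¹ * Jfun n) := by
    rw [integral_const_mul, hscale2, ← mul_assoc r, hrpow]
  have hrn : (0:ℝ) < r ^ n := by positivity
  have hGpos : (0:ℝ) < Real.Gamma ((n:ℝ) / 2 + 1 / 2) := Real.Gamma_pos_of_pos (by positivity)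
  have final : (n:ℝ) * ((r ^ n)⁻¹ * Jfun n) =
      (Real.sqrt Real.pi * Real.Gamma ((n : ℝ) / 2 + 1) /
        Real.Gamma ((n : ℝ) / 2 + 1 / 2)) / r ^ n := by
    rw [J_eq_R n hn]
    unfold Rfun
    rw [show ((n:ℝ) + 1) / 2 = (n:ℝ) / 2 + 1 / 2 by ring,
      show Real.Gamma ((n:ℝ) / 2 + 1) = ((n:ℝ) / 2) * Real.Gamma ((n:ℝ) / 2) from
        Real.Gamma_add_one (by positivity)]
    field_simp
  calc ∫ τ in Set.Ioi (0 : ℝ),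
        (n : ℝ) * (r ^ 2 + 2 * r * τ * Real.cos ψ + τ ^ 2) ^ (-s)
      ≤ ∫ τ in Ioi (0:ℝ), (n:ℝ) * (r ^ 2 + τ ^ 2) ^ (-s) := step1
    _ = (n:ℝ) * ((r ^ n)⁻¹ * Jfun n) := step2
    _ = _ := final
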